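/- arXiv:math/0108182 — 3 statements merged into one kernel-verified Lean document; each statement's English description precedes it below -/
import Mathlib

section
/- Error decay for the approximate special Lagrangian: there is a constant C, independent of δ ∈ (0,1), such that ∫_{A_δ} ((x β_x + y β_y)·δ²/(2(x²+y²)))² · (1 + δ⁴/(4(x²+y²)²)) dx dy ≤ C·δ²/(log√δ)², where β(x,y) = log(√(x²+y²)/√δ)/log(√δ) and A_δ = {δ² ≤ x²+y² ≤ δ}. -/
open MeasureTheory

/-- The annulus A_δ = {(x,y) : δ² ≤ x² + y² ≤ δ} in ℝ². -/
def annulus (δ : ℝ) : Set (ℝ × ℝ) :=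
  {p : ℝ × ℝ | δ ^ 2 ≤ p.1 ^ 2 + p.2 ^ 2 ∧ p.1 ^ 2 + p.2 ^ 2 ≤ δ}

/-- The cutoff function β(x,y) = log(√(x²+y²)/√δ)/log(√δ). -/
noncomputable def cutoff (δ : ℝ) (p : ℝ × ℝ) : ℝ :=
  Real.log (Real.sqrt (p.1 ^ 2 + p.2 ^ 2) / Real.sqrt δ) / Real.log (Real.sqrt δ)

open Set

lemma log_sqrt_ne {δ : ℝ} (hδ : 0 < δ) (hδ1 : δ < 1) : Real.log (Real.sqrt δ) ≠ 0 := by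
  have hsd : (0:ℝ) < Real.sqrt δ := Real.sqrt_pos.mpr hδ
  have : Real.sqrt δ < 1 := by
    rw [show (1:ℝ) = Real.sqrt 1 by simp]
    exact Real.sqrt_lt_sqrt hδ.le hδ1
  exact ne_of_lt (Real.log_neg hsd this)

lemma cutoff_fderiv_apply {δ : ℝ} (hδ : 0 < δ) (hδ1 : δ < 1) {p : ℝ × ℝ}
    (hp : 0 < p.1 ^ 2 + p.2 ^ 2) (v : ℝ × ℝ) :
    fderiv ℝ (cutoff δ) p v =
      (p.1 * v.1 + p.2 * v.2) / ((p.1 ^ 2 + p.2 ^ 2) * Real.log (Real.sqrt δ)) := by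
  have hs : p.1 ^ 2 + p.2 ^ 2 ≠ 0 := ne_of_gt hp
  have hsd : (0:ℝ) < Real.sqrt δ := Real.sqrt_pos.mpr hδ
  have hld : Real.log (Real.sqrt δ) ≠ 0 := log_sqrt_ne hδ hδ1
  set c : ℝ := (2 * Real.log (Real.sqrt δ))⁻¹ with hc
  have h1 : HasFDerivAt (fun q : ℝ × ℝ => q.1 ^ 2 + q.2 ^ 2)
      (p.1 • ContinuousLinearMap.fst ℝ ℝ ℝ + p.1 • ContinuousLinearMap.fst ℝ ℝ ℝ
        + (p.2 • ContinuousLinearMap.snd ℝ ℝ ℝ + p.2 • ContinuousLinearMap.snd ℝ ℝ ℝ)) p := by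
    have e : (fun q : ℝ × ℝ => q.1 ^ 2 + q.2 ^ 2) = fun q => q.1 * q.1 + q.2 * q.2 := by
      funext q; ring
    rw [e]
    exact (hasFDerivAt_fst.mul hasFDerivAt_fst).add (hasFDerivAt_snd.mul hasFDerivAt_snd)
  have hg := (((Real.hasDerivAt_log hs).comp_hasFDerivAt p h1).mul_const c).sub_const 1
  have heq : cutoff δ =ᶠ[nhds p] (fun q : ℝ × ℝ => Real.log (q.1 ^ 2 + q.2 ^ 2) * c - 1) := by
    have hopen : IsOpen {q : ℝ × ℝ | 0 < q.1 ^ 2 + q.2 ^ 2} :=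
      isOpen_lt continuous_const (by continuity)
    filter_upwards [hopen.mem_nhds hp] with q hq
    have hq' : (0:ℝ) < q.1 ^ 2 + q.2 ^ 2 := hq
    have hsq : Real.sqrt (q.1 ^ 2 + q.2 ^ 2) ≠ 0 := (Real.sqrt_pos.mpr hq').ne'
    unfold cutoff
    rw [Real.log_div hsq hsd.ne', Real.log_sqrt hq'.le]
    field_simp
    rw [mul_sub, mul_one, mul_left_comm, mul_inv_cancel₀ (mul_ne_zero two_ne_zero hld), mul_one]
  simp only [Function.comp_def] at hg
  rw [Filter.EventuallyEq.fderiv_eq heq, hg.fderiv]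
  simp only [ContinuousLinearMap.coe_comp', Function.comp_apply, ContinuousLinearMap.coe_smul',
    Pi.smul_apply, ContinuousLinearMap.add_apply, ContinuousLinearMap.smul_apply,
    ContinuousLinearMap.coe_fst', ContinuousLinearMap.coe_snd', smul_eq_mul, hc,
    ContinuousLinearMap.coe_sub', Pi.sub_apply]
  field_simp
  ring

lemma measurableSet_annulus (δ : ℝ) : MeasurableSet (annulus δ) := by
  have hc : Continuous (fun p : ℝ × ℝ => p.1 ^ 2 + p.2 ^ 2) := by continuity
  exact ((isClosed_le continuous_const hc).inter (isClosed_le hc continuous_const)).measurableSet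

lemma integral_annulus {δ : ℝ} (hδ : 0 < δ) (hδ1 : δ < 1) :
    ∫ p in annulus δ, ((p.1 ^ 2 + p.2 ^ 2) ^ 2)⁻¹ = Real.pi * ((δ ^ 2)⁻¹ - δ⁻¹) := by
  have hsd : (0:ℝ) < Real.sqrt δ := Real.sqrt_pos.mpr hδ
  have hδs : δ ≤ Real.sqrt δ := by
    have h := Real.sqrt_le_sqrt (show δ ^ 2 ≤ δ by nlinarith)
    rwa [Real.sqrt_sq hδ.le] at h
  rw [← integral_indicator (measurableSet_annulus δ),
    ← integral_comp_polarCoord_symm]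
  have htar : polarCoord.target = Set.Ioi (0:ℝ) ×ˢ Set.Ioo (-Real.pi) Real.pi := rfl
  have key : EqOn
      (fun z : ℝ × ℝ => z.1 • Set.indicator (annulus δ)
        (fun p => ((p.1 ^ 2 + p.2 ^ 2) ^ 2)⁻¹) (polarCoord.symm z))
      (fun z : ℝ × ℝ => (Set.Icc δ (Real.sqrt δ)).indicator (fun r => (r ^ 3)⁻¹) z.1 * (1:ℝ))
      polarCoord.target := by
    rintro ⟨r, θ⟩ hz
    rw [htar] at hz
    obtain ⟨hr, hθ⟩ := hz
    simp only [Set.mem_Ioi] at hr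
    have hsymm : polarCoord.symm (r, θ) = (r * Real.cos θ, r * Real.sin θ) := rfl
    have hsq : (r * Real.cos θ) ^ 2 + (r * Real.sin θ) ^ 2 = r ^ 2 := by
      nlinarith [Real.sin_sq_add_cos_sq θ]
    have hmem : polarCoord.symm (r, θ) ∈ annulus δ ↔ r ∈ Set.Icc δ (Real.sqrt δ) := by
      rw [hsymm]
      show δ ^ 2 ≤ _ ∧ _ ↔ _
      rw [hsq, Set.mem_Icc]
      constructor
      · rintro ⟨h1, h2⟩
        refine ⟨by nlinarith, Real.le_sqrt_of_sq_le h2⟩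
      · rintro ⟨h1, h2⟩
        have h3 := Real.sq_sqrt hδ.le
        refine ⟨by nlinarith, by nlinarith⟩
    by_cases h : r ∈ Set.Icc δ (Real.sqrt δ)
    · dsimp only
      rw [Set.indicator_of_mem (hmem.mpr h), Set.indicator_of_mem h, hsymm]
      simp only [smul_eq_mul, mul_one, hsq]
      field_simp
    · dsimp only
      rw [Set.indicator_of_notMem (fun hh => h (hmem.mp hh)), Set.indicator_of_notMem h]
      simp
  rw [setIntegral_congr_fun polarCoord.open_target.measurableSet key, htar, Measure.volume_eq_prod,
    show (∫ x in Ioi (0:ℝ) ×ˢ Ioo (-Real.pi) Real.pi,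
        (Icc δ (Real.sqrt δ)).indicator (fun r => (r ^ 3)⁻¹) x.1 * 1 ∂(volume.prod volume)) = _ from
      setIntegral_prod_mul (fun r : ℝ => (Icc δ (Real.sqrt δ)).indicator (fun r => (r ^ 3)⁻¹) r)
        (fun _ : ℝ => (1:ℝ)) _ _,
    setIntegral_indicator measurableSet_Icc,
    show Ioi (0:ℝ) ∩ Icc δ (Real.sqrt δ) = Icc δ (Real.sqrt δ) from
      inter_eq_self_of_subset_right (fun x hx => lt_of_lt_of_le hδ hx.1),
    integral_Icc_eq_integral_Ioc, ← intervalIntegral.integral_of_le hδs]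
  have h1 : ∫ x in Set.Ioo (-Real.pi) Real.pi, (1:ℝ) = 2 * Real.pi := by
    rw [setIntegral_const, measureReal_def, Real.volume_Ioo, smul_eq_mul, mul_one,
      ENNReal.toReal_ofReal (by linarith [Real.pi_pos])]
    ring
  have h2 : ∫ r in δ..Real.sqrt δ, (r ^ 3)⁻¹ = ((δ ^ 2)⁻¹ - δ⁻¹) / 2 := by
    have hzp : ∀ r : ℝ, (r ^ 3)⁻¹ = r ^ (-3 : ℤ) := fun r => by
      rw [zpow_neg]
      norm_cast
    simp_rw [hzp]
    rw [integral_zpow (Or.inr ⟨by norm_num, fun hmem => by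
      rw [Set.uIcc_of_le hδs] at hmem
      exact absurd hmem.1 (by linarith)⟩)]
    have e1 : (Real.sqrt δ) ^ ((-3 : ℤ) + 1) = δ⁻¹ := by
      norm_num
      exact Real.sq_sqrt hδ.le
    have e2 : δ ^ ((-3 : ℤ) + 1) = (δ ^ 2)⁻¹ := by
      norm_num
    rw [e1, e2]
    ring
  rw [h1, h2]
  ring

lemma isCompact_annulus {δ : ℝ} (hδ1 : δ < 1) : IsCompact (annulus δ) := by
  have hc : Continuous (fun p : ℝ × ℝ => p.1 ^ 2 + p.2 ^ 2) := by continuity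
  refine Metric.isCompact_of_isClosed_isBounded
    ((isClosed_le continuous_const hc).inter (isClosed_le hc continuous_const)) ?_
  rw [isBounded_iff_forall_norm_le]
  refine ⟨1, fun p hp => ?_⟩
  obtain ⟨h1, h2⟩ := hp
  have a1 : |p.1| ≤ 1 := by nlinarith [sq_abs p.1, abs_nonneg p.1, sq_nonneg p.2]
  have a2 : |p.2| ≤ 1 := by nlinarith [sq_abs p.2, abs_nonneg p.2, sq_nonneg p.1]
  rw [Prod.norm_def]
  simp only [Real.norm_eq_abs]
  exact max_le a1 a2

/-- Error decay for the approximate special Lagrangian: there is C,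
independent of δ ∈ (0,1), with
∫_{A_δ} ((x β_x + y β_y)·δ²/(2(x²+y²)))² · (1 + δ⁴/(4(x²+y²)²)) dx dy
≤ C·δ²/(log√δ)². -/
theorem stmt_9 :
    ∃ C > (0 : ℝ), ∀ δ : ℝ, 0 < δ → δ < 1 →
      (∫ p in annulus δ,
        ((p.1 * fderiv ℝ (cutoff δ) p (1, 0) + p.2 * fderiv ℝ (cutoff δ) p (0, 1))
              * δ ^ 2 / (2 * (p.1 ^ 2 + p.2 ^ 2))) ^ 2
          * (1 + δ ^ 4 / (4 * (p.1 ^ 2 + p.2 ^ 2) ^ 2)))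
        ≤ C * δ ^ 2 / (Real.log (Real.sqrt δ)) ^ 2 := by
  refine ⟨Real.pi, Real.pi_pos, fun δ hδ hδ1 => ?_⟩
  set L : ℝ := Real.log (Real.sqrt δ) with hL
  have hld : L ≠ 0 := log_sqrt_ne hδ hδ1
  have hL2 : 0 < L ^ 2 := by positivity
  have hsc : Continuous (fun p : ℝ × ℝ => p.1 ^ 2 + p.2 ^ 2) := by continuity
  have hpos : ∀ p ∈ annulus δ, 0 < p.1 ^ 2 + p.2 ^ 2 := fun p hp =>
    lt_of_lt_of_le (by positivity) hp.1
  -- step 1 : rewrite the integrand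
  have step1 : (∫ p in annulus δ,
        ((p.1 * fderiv ℝ (cutoff δ) p (1, 0) + p.2 * fderiv ℝ (cutoff δ) p (0, 1))
              * δ ^ 2 / (2 * (p.1 ^ 2 + p.2 ^ 2))) ^ 2
          * (1 + δ ^ 4 / (4 * (p.1 ^ 2 + p.2 ^ 2) ^ 2)))
      = ∫ p in annulus δ,
          ((1 / L) * δ ^ 2 / (2 * (p.1 ^ 2 + p.2 ^ 2))) ^ 2
            * (1 + δ ^ 4 / (4 * (p.1 ^ 2 + p.2 ^ 2) ^ 2)) := by
    refine setIntegral_congr_fun (measurableSet_annulus δ) (fun p hp => ?_)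
    have hp' := hpos p hp
    rw [cutoff_fderiv_apply hδ hδ1 hp', cutoff_fderiv_apply hδ hδ1 hp']
    have : p.1 * ((p.1 * (1:ℝ) + p.2 * 0) / ((p.1 ^ 2 + p.2 ^ 2) * L))
        + p.2 * ((p.1 * 0 + p.2 * (1:ℝ)) / ((p.1 ^ 2 + p.2 ^ 2) * L)) = 1 / L := by
      field_simp
      ring
    rw [this]
  rw [step1]
  -- step 2 : pointwise bound and integrate
  have hcont1 : ContinuousOn (fun p : ℝ × ℝ =>
      ((1 / L) * δ ^ 2 / (2 * (p.1 ^ 2 + p.2 ^ 2))) ^ 2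
        * (1 + δ ^ 4 / (4 * (p.1 ^ 2 + p.2 ^ 2) ^ 2))) (annulus δ) := by
    refine ContinuousOn.mul ?_ ?_
    · exact (continuousOn_const.div ((continuous_const.mul hsc).continuousOn)
        (fun p hp => by have := hpos p hp; exact mul_ne_zero two_ne_zero this.ne')).pow 2
    · exact continuousOn_const.add (continuousOn_const.div
        ((continuous_const.mul (hsc.pow 2)).continuousOn)
        (fun p hp => by have := hpos p hp; positivity))
  have hcont2 : ContinuousOn (fun p : ℝ × ℝ =>
      (5 / 16) * δ ^ 4 / L ^ 2 * ((p.1 ^ 2 + p.2 ^ 2) ^ 2)⁻¹) (annulus δ) := by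
    exact continuousOn_const.mul (((hsc.pow 2).continuousOn).inv₀
      (fun p hp => by have := hpos p hp; exact pow_ne_zero 2 this.ne'))
  have step2 : (∫ p in annulus δ,
        ((1 / L) * δ ^ 2 / (2 * (p.1 ^ 2 + p.2 ^ 2))) ^ 2
          * (1 + δ ^ 4 / (4 * (p.1 ^ 2 + p.2 ^ 2) ^ 2)))
      ≤ ∫ p in annulus δ, (5 / 16) * δ ^ 4 / L ^ 2 * ((p.1 ^ 2 + p.2 ^ 2) ^ 2)⁻¹ := by
    refine setIntegral_mono_on (hcont1.integrableOn_compact (isCompact_annulus hδ1))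
      (hcont2.integrableOn_compact (isCompact_annulus hδ1))
      (measurableSet_annulus δ) (fun p hp => ?_)
    have hp' := hpos p hp
    set s : ℝ := p.1 ^ 2 + p.2 ^ 2 with hs
    have hδ4 : δ ^ 4 ≤ s ^ 2 := by nlinarith [hp.1, sq_nonneg δ]
    have e1 : ((1 / L) * δ ^ 2 / (2 * s)) ^ 2 = δ ^ 4 / (4 * s ^ 2 * L ^ 2) := by
      field_simp
      ring
    have e2 : (5:ℝ) / 16 * δ ^ 4 / L ^ 2 * (s ^ 2)⁻¹ = δ ^ 4 / (4 * s ^ 2 * L ^ 2) * (5 / 4) := by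
      field_simp
      ring
    rw [e1, e2]
    have hb : 1 + δ ^ 4 / (4 * s ^ 2) ≤ 5 / 4 := by
      have : δ ^ 4 / (4 * s ^ 2) ≤ 1 / 4 := by
        rw [div_le_div_iff₀ (by positivity) (by norm_num)]
        nlinarith
      linarith
    exact mul_le_mul_of_nonneg_left hb (by positivity)
  refine le_trans step2 ?_
  rw [show (fun p : ℝ × ℝ => (5 / 16) * δ ^ 4 / L ^ 2 * ((p.1 ^ 2 + p.2 ^ 2) ^ 2)⁻¹) = _ from rfl,
    integral_const_mul, integral_annulus hδ hδ1]
  -- final arithmetic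
  have hπ := Real.pi_pos
  have e3 : (5:ℝ) / 16 * δ ^ 4 / L ^ 2 * (Real.pi * ((δ ^ 2)⁻¹ - δ⁻¹))
      = (5 / 16 * Real.pi * (δ ^ 2 - δ ^ 3)) / L ^ 2 := by
    field_simp
  have e4 : Real.pi * δ ^ 2 / L ^ 2 = (Real.pi * δ ^ 2) / L ^ 2 := rfl
  rw [e3, e4, div_le_div_iff₀ hL2 hL2]
  nlinarith [mul_nonneg (mul_nonneg hπ.le hL2.le) (pow_pos hδ 2).le,
    mul_nonneg (mul_nonneg hπ.le hL2.le) (pow_pos hδ 3).le]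
end

section
/- Poincaré inequality for n ≥ 3 from the Michael–Simon inequality: assume for all nonnegative g ∈ C¹_c(N), (∫ g^{n/(n-1)})^{(n-1)/n} ≤ c ∫(|∇g| + g|H|) with ‖H‖_{L^n(N)} ≤ C₁ and c·C₁ < 1. Then for all nonnegative h ∈ C¹_c(N), ((1 − c·C₁)/C)·‖h‖_{L²} ≤ ‖∇h‖_{L^{2n/(n+2)}}, where C depends only on n and c. In particular, since vol(N) is finite, ‖h‖_{L²} ≤ C'·‖∇h‖_{L²}. -/
open MeasureTheory

lemma helper_memLp {α : Type*} [MeasurableSpace α] {μ : Measure α} {f : α → ℝ}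
    (hf : AEMeasurable f μ) (hnn : ∀ a, 0 ≤ f a) {p : ℝ} (hp : 0 < p)
    (hi : Integrable (fun a => f a ^ p) μ) : MemLp f (ENNReal.ofReal p) μ := by
  have hq0 : (ENNReal.ofReal p) ≠ 0 := by simp [hp]
  have hqt : (ENNReal.ofReal p) ≠ ⊤ := ENNReal.ofReal_ne_top
  have := (memLp_norm_rpow_iff (p := ENNReal.ofReal p) (q := ENNReal.ofReal p)
    hf.aestronglyMeasurable hq0 hqt)
  rw [ENNReal.div_self hq0 hqt] at this
  rw [← this, memLp_one_iff_integrable]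
  refine hi.congr (Filter.Eventually.of_forall fun a => ?_)
  simp only [Real.norm_of_nonneg (hnn a), ENNReal.toReal_ofReal hp.le]

/-- Poincaré inequality for n ≥ 3 from the Michael–Simon inequality.
`N` is abstracted as a finite measure space; `h ≥ 0` is a C¹_c function with gradient
norm `gradh = |∇h|` and mean curvature `H`. The Michael–Simon inequality is assumed for
g = h^{(2n−2)/n}, whose gradient norm is ((2n−2)/n)·h^{(n−2)/n}·gradh by the chain rule.
Assuming ‖H‖_{L^n} ≤ C₁ and c·C₁ < 1, there are constants C (depending only on n and c)
and C' with ((1 − c·C₁)/C)·‖h‖_{L²} ≤ ‖∇h‖_{L^{2n/(n+2)}} and ‖h‖_{L²} ≤ C'·‖∇h‖_{L²}. -/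
theorem stmt_11 {α : Type*} [MeasurableSpace α] (μ : Measure α) [IsFiniteMeasure μ]
    (n : ℕ) (hn : 3 ≤ n) (c C₁ : ℝ) (hc : 0 < c) (hC₁ : 0 ≤ C₁) (hsmall : c * C₁ < 1) :
    ∃ C > (0 : ℝ), ∃ C' > (0 : ℝ), ∀ h gradh H : α → ℝ,
      (∀ a, 0 ≤ h a) → (∀ a, 0 ≤ gradh a) →
      AEMeasurable h μ → AEMeasurable gradh μ → AEMeasurable H μ →
      Integrable (fun a => (h a) ^ 2) μ →
      Integrable (fun a => (gradh a) ^ 2) μ →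
      Integrable (fun a => (gradh a) ^ ((2 * (n : ℝ)) / ((n : ℝ) + 2))) μ →
      Integrable (fun a => |H a| ^ (n : ℝ)) μ →
      Integrable (fun a => ((2 * (n : ℝ) - 2) / n) * h a ^ (((n : ℝ) - 2) / n) * gradh a
          + h a ^ ((2 * (n : ℝ) - 2) / n) * |H a|) μ →
      -- the Michael–Simon Sobolev inequality applied to g = h^{(2n−2)/n}:
      (∫ a, (h a ^ ((2 * (n : ℝ) - 2) / n)) ^ ((n : ℝ) / ((n : ℝ) - 1)) ∂μ)
            ^ (((n : ℝ) - 1) / n)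
        ≤ c * ∫ a, (((2 * (n : ℝ) - 2) / n) * h a ^ (((n : ℝ) - 2) / n) * gradh a
            + h a ^ ((2 * (n : ℝ) - 2) / n) * |H a|) ∂μ →
      (∫ a, |H a| ^ (n : ℝ) ∂μ) ^ (1 / (n : ℝ)) ≤ C₁ →
      ((1 - c * C₁) / C) * (∫ a, (h a) ^ 2 ∂μ) ^ ((1 : ℝ) / 2)
          ≤ (∫ a, (gradh a) ^ ((2 * (n : ℝ)) / ((n : ℝ) + 2)) ∂μ)
              ^ (((n : ℝ) + 2) / (2 * n))
        ∧ (∫ a, (h a) ^ 2 ∂μ) ^ ((1 : ℝ) / 2)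
          ≤ C' * (∫ a, (gradh a) ^ 2 ∂μ) ^ ((1 : ℝ) / 2) := by
  have hm3 : (3:ℝ) ≤ (n:ℝ) := by exact_mod_cast hn
  set m : ℝ := (n:ℝ) with hmdef
  have hm0 : (0:ℝ) < m := by linarith
  have hmne : m ≠ 0 := ne_of_gt hm0
  have hm2 : m - 2 ≠ 0 := by intro e; nlinarith [e]
  have hm2' : (0:ℝ) < m - 2 := by linarith
  have hm1 : m - 1 ≠ 0 := by intro e; nlinarith [e]
  have hm1' : (0:ℝ) < m - 1 := by linarith
  have hmp2 : (0:ℝ) < m + 2 := by linarith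
  have hcC : (0:ℝ) < 1 - c * C₁ := by linarith
  have hK : (0:ℝ) < c * ((2 * m - 2) / m) := by
    apply mul_pos hc; apply div_pos (by linarith) hm0
  set V : ℝ := (μ Set.univ).toReal with hVdef
  have hV0 : (0:ℝ) ≤ V := ENNReal.toReal_nonneg
  have hC'aux : (0:ℝ) ≤ c * ((2 * m - 2) / m) / (1 - c * C₁) * V ^ (1/m) :=
    mul_nonneg (div_nonneg hK.le hcC.le) (Real.rpow_nonneg hV0 _)
  refine ⟨c * ((2 * m - 2) / m), hK,
    c * ((2 * m - 2) / m) / (1 - c * C₁) * V ^ (1/m) + 1, by linarith, ?_⟩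
  intro h gradh H hh0 hg0 hhm hgm hHm hih2 hig2 higp hiHn hisum hMS hHC₁
  set X := ∫ a, h a ^ 2 ∂μ with hXdef
  have hX0 : (0:ℝ) ≤ X :=
    integral_nonneg fun a => sq_nonneg _
  have hGp0 : (0:ℝ) ≤ ∫ a, gradh a ^ (2 * m / (m + 2)) ∂μ :=
    integral_nonneg fun a => Real.rpow_nonneg (hg0 a) _
  have hG20 : (0:ℝ) ≤ ∫ a, gradh a ^ 2 ∂μ :=
    integral_nonneg fun a => sq_nonneg _
  -- rewrite the LHS of the Michael–Simon inequality as X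
  have hL : (∫ a, (h a ^ ((2 * m - 2) / m)) ^ (m / (m - 1)) ∂μ) = X := by
    refine integral_congr_ae (Filter.Eventually.of_forall fun a => ?_)
    show (h a ^ ((2 * m - 2) / m)) ^ (m / (m - 1)) = h a ^ 2
    rw [← Real.rpow_mul (hh0 a),
      show ((2 * m - 2) / m) * (m / (m - 1)) = (2:ℝ) by field_simp; try ring,
      Real.rpow_two]
  rw [hL] at hMS
  -- split the integral of A + B
  have hHabs : AEMeasurable (fun a => |H a|) μ := by
    simpa [Real.norm_eq_abs] using hHm.norm
  have measA : AEMeasurable (fun a => (2 * m - 2) / m * h a ^ ((m - 2) / m) * gradh a) μ :=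
    (aemeasurable_const.mul (hhm.pow_const _)).mul hgm
  have measB : AEMeasurable (fun a => h a ^ ((2 * m - 2) / m) * |H a|) μ :=
    (hhm.pow_const _).mul hHabs
  have hA0 : ∀ a, (0:ℝ) ≤ (2 * m - 2) / m * h a ^ ((m - 2) / m) * gradh a := fun a =>
    mul_nonneg (mul_nonneg (div_nonneg (by linarith) hm0.le) (Real.rpow_nonneg (hh0 a) _)) (hg0 a)
  have hB0 : ∀ a, (0:ℝ) ≤ h a ^ ((2 * m - 2) / m) * |H a| := fun a =>
    mul_nonneg (Real.rpow_nonneg (hh0 a) _) (abs_nonneg _)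
  have intA : Integrable (fun a => (2 * m - 2) / m * h a ^ ((m - 2) / m) * gradh a) μ := by
    refine hisum.mono' measA.aestronglyMeasurable (Filter.Eventually.of_forall fun a => ?_)
    rw [Real.norm_of_nonneg (hA0 a)]
    have := hB0 a; linarith
  have intB : Integrable (fun a => h a ^ ((2 * m - 2) / m) * |H a|) μ := by
    refine hisum.mono' measB.aestronglyMeasurable (Filter.Eventually.of_forall fun a => ?_)
    rw [Real.norm_of_nonneg (hB0 a)]
    have := hA0 a; linarith
  rw [integral_add intA intB] at hMS
  -- Hölder for the gradient term
  have hconj1 : Real.HolderConjugate (2 * m / (m + 2)) (2 * m / (m - 2)) := by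
    rw [Real.holderConjugate_iff]; constructor
    · rw [lt_div_iff₀ hmp2]; linarith
    · rw [← one_div, ← one_div, one_div_div, one_div_div]; field_simp; try ring
  have hmemg : MemLp gradh (ENNReal.ofReal (2 * m / (m + 2))) μ :=
    helper_memLp hgm hg0 (div_pos (by linarith) hmp2) higp
  have hmemh1 : MemLp (fun a => h a ^ ((m - 2) / m)) (ENNReal.ofReal (2 * m / (m - 2))) μ := by
    refine helper_memLp (hhm.pow_const _)
      (fun a => Real.rpow_nonneg (hh0 a) _) (div_pos (by linarith) hm2') ?_
    refine hih2.congr (Filter.Eventually.of_forall fun a => ?_)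
    show h a ^ 2 = (h a ^ ((m - 2) / m)) ^ (2 * m / (m - 2))
    rw [← Real.rpow_mul (hh0 a),
      show ((m - 2) / m) * (2 * m / (m - 2)) = (2:ℝ) by field_simp; try ring,
      Real.rpow_two]
  have hold1 := integral_mul_le_Lp_mul_Lq_of_nonneg hconj1
    (Filter.Eventually.of_forall hg0)
    (Filter.Eventually.of_forall fun a => Real.rpow_nonneg (hh0 a) _) hmemg hmemh1
  have e2 : (∫ a, (h a ^ ((m - 2) / m)) ^ (2 * m / (m - 2)) ∂μ) = X := by
    refine integral_congr_ae (Filter.Eventually.of_forall fun a => ?_)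
    show (h a ^ ((m - 2) / m)) ^ (2 * m / (m - 2)) = h a ^ 2
    rw [← Real.rpow_mul (hh0 a),
      show ((m - 2) / m) * (2 * m / (m - 2)) = (2:ℝ) by field_simp; try ring,
      Real.rpow_two]
  rw [e2, one_div_div, one_div_div] at hold1
  -- hold1 : ∫ gradh * h^((m-2)/m) ≤ (∫ gradh^p)^((m+2)/(2m)) * X^((m-2)/(2m))
  have hAeq : ∫ a, (2 * m - 2) / m * h a ^ ((m - 2) / m) * gradh a ∂μ
      = (2 * m - 2) / m * ∫ a, gradh a * h a ^ ((m - 2) / m) ∂μ := by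
    rw [← integral_const_mul]
    exact integral_congr_ae (Filter.Eventually.of_forall fun a => by ring)
  -- Hölder for the curvature term
  have hconj2 : Real.HolderConjugate (m / (m - 1)) m := by
    rw [Real.holderConjugate_iff]; constructor
    · rw [lt_div_iff₀ hm1']; linarith
    · rw [← one_div, ← one_div, one_div_div]; field_simp; ring
  have hmemh2 : MemLp (fun a => h a ^ ((2 * m - 2) / m)) (ENNReal.ofReal (m / (m - 1))) μ := by
    refine helper_memLp (hhm.pow_const _)
      (fun a => Real.rpow_nonneg (hh0 a) _) (div_pos hm0 hm1') ?_
    refine hih2.congr (Filter.Eventually.of_forall fun a => ?_)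
    show h a ^ 2 = (h a ^ ((2 * m - 2) / m)) ^ (m / (m - 1))
    rw [← Real.rpow_mul (hh0 a),
      show ((2 * m - 2) / m) * (m / (m - 1)) = (2:ℝ) by field_simp; try ring,
      Real.rpow_two]
  have hmemH : MemLp (fun a => |H a|) (ENNReal.ofReal m) μ :=
    helper_memLp hHabs (fun a => abs_nonneg _) hm0 hiHn
  have hold2 := integral_mul_le_Lp_mul_Lq_of_nonneg hconj2
    (Filter.Eventually.of_forall fun a => Real.rpow_nonneg (hh0 a) _)
    (Filter.Eventually.of_forall fun a => abs_nonneg (H a)) hmemh2 hmemH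
  have e3 : (∫ a, (h a ^ ((2 * m - 2) / m)) ^ (m / (m - 1)) ∂μ) = X := hL
  rw [e3, one_div_div] at hold2
  -- hold2 : ∫ h^((2m-2)/m) * |H| ≤ X^((m-1)/m) * (∫ |H|^m)^(1/m)
  have hBX : (∫ a, h a ^ ((2 * m - 2) / m) * |H a| ∂μ) ≤ X ^ ((m - 1) / m) * C₁ :=
    hold2.trans (mul_le_mul_of_nonneg_left hHC₁ (Real.rpow_nonneg hX0 _))
  have hAX : (∫ a, (2 * m - 2) / m * h a ^ ((m - 2) / m) * gradh a ∂μ)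
      ≤ (2 * m - 2) / m *
        ((∫ a, gradh a ^ (2 * m / (m + 2)) ∂μ) ^ ((m + 2) / (2 * m)) * X ^ ((m - 2) / (2 * m))) := by
    rw [hAeq]
    refine mul_le_mul_of_nonneg_left hold1 (div_nonneg (by linarith) hm0.le)
  -- combine
  have hG0 : (0:ℝ) ≤ (∫ a, gradh a ^ (2 * m / (m + 2)) ∂μ) ^ ((m + 2) / (2 * m)) :=
    Real.rpow_nonneg hGp0 _
  have hmain : (1 - c * C₁) * X ^ ((m - 1) / m)
      ≤ (c * ((2 * m - 2) / m)) *
        ((∫ a, gradh a ^ (2 * m / (m + 2)) ∂μ) ^ ((m + 2) / (2 * m)) * X ^ ((m - 2) / (2 * m))) := by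
    have t1 := mul_le_mul_of_nonneg_left hAX hc.le
    have t2 := mul_le_mul_of_nonneg_left hBX hc.le
    have t3 : X ^ ((m - 1) / m)
        ≤ c * ((2 * m - 2) / m *
            ((∫ a, gradh a ^ (2 * m / (m + 2)) ∂μ) ^ ((m + 2) / (2 * m)) * X ^ ((m - 2) / (2 * m))))
          + c * (X ^ ((m - 1) / m) * C₁) := by
      refine hMS.trans ?_
      rw [mul_add]
      exact add_le_add t1 t2
    linarith [t3]
  -- first conclusion
  have g1 : ((1 - c * C₁) / (c * ((2 * m - 2) / m))) * X ^ ((1:ℝ)/2)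
      ≤ (∫ a, gradh a ^ (2 * m / (m + 2)) ∂μ) ^ ((m + 2) / (2 * m)) := by
    rcases hX0.eq_or_lt with h0 | hXpos
    · rw [← h0, Real.zero_rpow (by norm_num : (1:ℝ)/2 ≠ 0), mul_zero]
      exact hG0
    · have hθpos : (0:ℝ) < X ^ ((m - 2) / (2 * m)) := Real.rpow_pos_of_pos hXpos _
      have hsplitX : X ^ ((m - 1) / m) = X ^ ((1:ℝ)/2) * X ^ ((m - 2) / (2 * m)) := by
        rw [← Real.rpow_add hXpos]; congr 1; field_simp; try ring
      rw [hsplitX] at hmain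
      have h2 : (1 - c * C₁) * X ^ ((1:ℝ)/2)
          ≤ (c * ((2 * m - 2) / m)) * (∫ a, gradh a ^ (2 * m / (m + 2)) ∂μ) ^ ((m + 2) / (2 * m)) := by
        have h3 : ((1 - c * C₁) * X ^ ((1:ℝ)/2)) * X ^ ((m - 2) / (2 * m))
            ≤ ((c * ((2 * m - 2) / m)) *
              (∫ a, gradh a ^ (2 * m / (m + 2)) ∂μ) ^ ((m + 2) / (2 * m))) * X ^ ((m - 2) / (2 * m)) := by
          rw [mul_assoc, mul_assoc]; exact hmain
        exact le_of_mul_le_mul_right h3 hθpos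
      rw [div_mul_eq_mul_div, div_le_iff₀ hK]
      linarith [h2]
  refine ⟨g1, ?_⟩
  -- second conclusion
  have hconj3 : Real.HolderConjugate ((m + 2) / m) ((m + 2) / 2) := by
    rw [Real.holderConjugate_iff]; constructor
    · rw [lt_div_iff₀ hm0]; linarith
    · rw [← one_div, ← one_div, one_div_div, one_div_div]; field_simp
  have mem1 : MemLp (fun a => gradh a ^ (2 * m / (m + 2))) (ENNReal.ofReal ((m + 2) / m)) μ := by
    refine helper_memLp (hgm.pow_const _)
      (fun a => Real.rpow_nonneg (hg0 a) _) (div_pos hmp2 hm0) ?_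
    refine hig2.congr (Filter.Eventually.of_forall fun a => ?_)
    show gradh a ^ 2 = (gradh a ^ (2 * m / (m + 2))) ^ ((m + 2) / m)
    rw [← Real.rpow_mul (hg0 a),
      show (2 * m / (m + 2)) * ((m + 2) / m) = (2:ℝ) by field_simp,
      Real.rpow_two]
  have mem2 : MemLp (fun _ : α => (1:ℝ)) (ENNReal.ofReal ((m + 2) / 2)) μ := memLp_const 1
  have hH2 := integral_mul_le_Lp_mul_Lq_of_nonneg hconj3
    (Filter.Eventually.of_forall fun a => Real.rpow_nonneg (hg0 a) _)
    (Filter.Eventually.of_forall fun _ => zero_le_one) mem1 mem2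
  simp only [mul_one, Real.one_rpow, integral_const, smul_eq_mul] at hH2
  have hrw : (∫ a, (gradh a ^ (2 * m / (m + 2))) ^ ((m + 2) / m) ∂μ)
      = ∫ a, gradh a ^ 2 ∂μ := by
    refine integral_congr_ae (Filter.Eventually.of_forall fun a => ?_)
    show (gradh a ^ (2 * m / (m + 2))) ^ ((m + 2) / m) = gradh a ^ 2
    rw [← Real.rpow_mul (hg0 a),
      show (2 * m / (m + 2)) * ((m + 2) / m) = (2:ℝ) by field_simp,
      Real.rpow_two]
  rw [hrw] at hH2
  have step := Real.rpow_le_rpow hGp0 hH2 (le_of_lt (show (0:ℝ) < (m + 2) / (2 * m) by positivity))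
  have hGbound : (∫ a, gradh a ^ (2 * m / (m + 2)) ∂μ) ^ ((m + 2) / (2 * m))
      ≤ V ^ (1/m) * (∫ a, gradh a ^ 2 ∂μ) ^ ((1:ℝ)/2) := by
    calc (∫ a, gradh a ^ (2 * m / (m + 2)) ∂μ) ^ ((m + 2) / (2 * m))
        ≤ ((∫ a, gradh a ^ 2 ∂μ) ^ (1 / ((m + 2) / m)) * V ^ (1 / ((m + 2) / 2)))
            ^ ((m + 2) / (2 * m)) := step
      _ = V ^ (1/m) * (∫ a, gradh a ^ 2 ∂μ) ^ ((1:ℝ)/2) := by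
          rw [Real.mul_rpow (Real.rpow_nonneg hG20 _) (Real.rpow_nonneg hV0 _),
            ← Real.rpow_mul hG20, ← Real.rpow_mul hV0,
            show (1 / ((m + 2) / m)) * ((m + 2) / (2 * m)) = (1:ℝ)/2 by field_simp; try ring,
            show (1 / ((m + 2) / 2)) * ((m + 2) / (2 * m)) = 1/m by field_simp]
          ring
  have hKdiv : (0:ℝ) < c * ((2 * m - 2) / m) / (1 - c * C₁) := div_pos hK hcC
  have hX12 : X ^ ((1:ℝ)/2) ≤ (c * ((2 * m - 2) / m) / (1 - c * C₁)) *
      (∫ a, gradh a ^ (2 * m / (m + 2)) ∂μ) ^ ((m + 2) / (2 * m)) := by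
    have t := mul_le_mul_of_nonneg_left g1 hKdiv.le
    have hcancel : (c * ((2 * m - 2) / m) / (1 - c * C₁)) *
        ((1 - c * C₁) / (c * ((2 * m - 2) / m))) = 1 := by
      have hden : (0:ℝ) < m * (1 - c * C₁) * (c * (2 * m - 2)) :=
        mul_pos (mul_pos hm0 hcC) (mul_pos hc (by linarith))
      field_simp
    calc X ^ ((1:ℝ)/2)
        = (c * ((2 * m - 2) / m) / (1 - c * C₁)) *
          (((1 - c * C₁) / (c * ((2 * m - 2) / m))) * X ^ ((1:ℝ)/2)) := by
          rw [← mul_assoc, hcancel, one_mul]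
      _ ≤ _ := t
  have hE0 : (0:ℝ) ≤ (∫ a, gradh a ^ 2 ∂μ) ^ ((1:ℝ)/2) := Real.rpow_nonneg hG20 _
  have hlast := hX12.trans (mul_le_mul_of_nonneg_left hGbound hKdiv.le)
  linarith [hlast, hE0, hC'aux]
end

section
/- Quantitative contraction/implicit function theorem in Banach spaces: let F : X → Y be a smooth map between Banach spaces with F(x) = F(0) + DF(0)x + N(x), let G : Y → X be a right inverse of DF(0) (DF(0)∘G = id), and suppose there is C > 0 with ‖G N(x) − G N(y)‖ ≤ C(‖x‖+‖y‖)‖x−y‖ for all x, y in the ball B_ε(0) with ε = 1/(8C). If ‖G F(0)‖ ≤ ε/2, then there exists a unique x₀ ∈ B_ε(0) with G F(0) + x₀ + G N(x₀) = 0 (hence F(x₀) = 0 if G is injective onto the relevant subspace), and ‖x₀‖ ≤ 2‖G F(0)‖. -/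
/-- Quantitative contraction / implicit function theorem in Banach spaces.
Let F : X → Y be smooth with Taylor expansion F(x) = F(0) + DF(0)x + N(x), let G be a
right inverse of DF(0), and suppose ‖G N(x) − G N(y)‖ ≤ C(‖x‖+‖y‖)‖x−y‖ on the ball of
radius ε = 1/(8C). If ‖G F(0)‖ ≤ ε/2, then there is a unique x₀ in that ball with
G F(0) + x₀ + G N(x₀) = 0, and ‖x₀‖ ≤ 2‖G F(0)‖. -/
theorem stmt_15 {X Y : Type*}
    [NormedAddCommGroup X] [NormedSpace ℝ X] [CompleteSpace X]
    [NormedAddCommGroup Y] [NormedSpace ℝ Y]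
    (F : X → Y) (D : X →L[ℝ] Y) (N : X → Y)
    (hTaylor : ∀ x, F x = F 0 + D x + N x)
    (G : Y →L[ℝ] X) (hG : ∀ y, D (G y) = y)
    (C ε : ℝ) (hC : 0 < C) (hε : ε = 1 / (8 * C))
    (hN : ∀ x ∈ Metric.closedBall (0 : X) ε, ∀ y ∈ Metric.closedBall (0 : X) ε,
      ‖G (N x) - G (N y)‖ ≤ C * (‖x‖ + ‖y‖) * ‖x - y‖)
    (hF0 : ‖G (F 0)‖ ≤ ε / 2) :
    ∃ x₀ ∈ Metric.closedBall (0 : X) ε,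
      G (F 0) + x₀ + G (N x₀) = 0 ∧ ‖x₀‖ ≤ 2 * ‖G (F 0)‖ ∧
      ∀ x₁ ∈ Metric.closedBall (0 : X) ε,
        G (F 0) + x₁ + G (N x₁) = 0 → x₁ = x₀ := by
  have hε0 : 0 < ε := by rw [hε]; positivity
  have hCε : C * ε = 1 / 8 := by rw [hε]; field_simp
  have hN0 : G (N 0) = 0 := by
    have h := hTaylor 0
    simp only [map_zero, add_zero] at h
    have : N 0 = 0 := by
      have := (left_eq_add).mp h
      exact this
    simp [this]
  have hGN : ∀ x ∈ Metric.closedBall (0 : X) ε, ‖G (N x)‖ ≤ C * ‖x‖ * ‖x‖ := by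
    intro x hx
    have h := hN x hx 0 (by simp [hε0.le])
    simpa [hN0] using h
  have hnorm : ∀ x ∈ Metric.closedBall (0 : X) ε, ‖x‖ ≤ ε := by
    intro x hx
    simpa [dist_zero_right] using hx
  have hself : ∀ x ∈ Metric.closedBall (0 : X) ε,
      -(G (F 0) + G (N x)) ∈ Metric.closedBall (0 : X) ε := by
    intro x hx
    have hx' := hnorm x hx
    have h1 := hGN x hx
    have h2 : C * ‖x‖ * ‖x‖ ≤ C * ε * ε :=
      mul_le_mul (mul_le_mul_of_nonneg_left hx' hC.le) hx' (norm_nonneg x) (by positivity)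
    simp only [Metric.mem_closedBall, dist_zero_right]
    calc ‖-(G (F 0) + G (N x))‖ = ‖G (F 0) + G (N x)‖ := norm_neg _
      _ ≤ ‖G (F 0)‖ + ‖G (N x)‖ := norm_add_le _ _
      _ ≤ ε / 2 + C * ε * ε := add_le_add hF0 (h1.trans h2)
      _ ≤ ε := by nlinarith
  set S := Metric.closedBall (0 : X) ε with hS
  haveI : CompleteSpace S := (Metric.isClosed_closedBall).completeSpace_coe
  have hSne : S.Nonempty := ⟨0, by simp [hS, hε0.le]⟩
  haveI : Nonempty S := hSne.to_subtype
  set f : S → S := fun x => ⟨-(G (F 0) + G (N x.1)), hself x.1 x.2⟩ with hf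
  -- key Lipschitz estimate
  have hlip : ∀ x y : S, dist (f x) (f y) ≤ (1 / 2 : ℝ) * dist x y := by
    intro x y
    have hd : dist (f x) (f y) = ‖G (N x.1) - G (N y.1)‖ := by
      rw [Subtype.dist_eq, dist_eq_norm]
      rw [show ((f x : X) - (f y : X)) = G (N y.1) - G (N x.1) from by
        show -(G (F 0) + G (N x.1)) - -(G (F 0) + G (N y.1)) = G (N y.1) - G (N x.1)
        abel]
      exact norm_sub_rev _ _
    rw [hd, Subtype.dist_eq, dist_eq_norm]
    have h1 := hN x.1 x.2 y.1 y.2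
    have hx' := hnorm x.1 x.2
    have hy' := hnorm y.1 y.2
    have h2 : C * (‖x.1‖ + ‖y.1‖) ≤ 1 / 4 := by nlinarith
    calc ‖G (N x.1) - G (N y.1)‖ ≤ C * (‖x.1‖ + ‖y.1‖) * ‖x.1 - y.1‖ := h1
      _ ≤ (1 / 4) * ‖x.1 - y.1‖ := by
          apply mul_le_mul_of_nonneg_right h2 (norm_nonneg _)
      _ ≤ (1 / 2) * ‖x.1 - y.1‖ := by
          have := norm_nonneg (x.1 - y.1); linarith
  have hcontr : ContractingWith (1 / 2 : NNReal) f := by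
    constructor
    · rw [show (1 / 2 : NNReal) = 2⁻¹ by norm_num]
      exact two_inv_lt_one
    · apply LipschitzWith.of_dist_le_mul
      intro x y
      refine le_trans (hlip x y) (le_of_eq ?_)
      norm_num
  set x₀ : S := ContractingWith.fixedPoint f hcontr with hx₀def
  have hfix : f x₀ = x₀ := hcontr.fixedPoint_isFixedPt
  have hx₀S : (x₀ : X) ∈ S := x₀.2
  have hxeq : (x₀ : X) = -(G (F 0) + G (N (x₀ : X))) :=
    (congrArg Subtype.val hfix).symm
  have heq : G (F 0) + (x₀ : X) + G (N x₀) = 0 := by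
    calc G (F 0) + (x₀ : X) + G (N (x₀ : X))
        = G (F 0) + -(G (F 0) + G (N (x₀ : X))) + G (N (x₀ : X)) := by
          nth_rewrite 1 [hxeq]; rfl
      _ = 0 := by abel
  refine ⟨x₀, hx₀S, heq, ?_, ?_⟩
  · -- norm bound
    have h1 := hGN x₀ hx₀S
    have hx' := hnorm x₀ hx₀S
    have h2 : ‖(x₀ : X)‖ ≤ ‖G (F 0)‖ + ‖G (N (x₀ : X))‖ := by
      calc ‖(x₀ : X)‖ = ‖-(G (F 0) + G (N (x₀ : X)))‖ := by rw [← hxeq]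
        _ = ‖G (F 0) + G (N (x₀ : X))‖ := norm_neg _
        _ ≤ _ := norm_add_le _ _
    have h3 : C * ‖(x₀ : X)‖ * ‖(x₀ : X)‖ ≤ 1 / 8 * ‖(x₀ : X)‖ := by
      have := mul_le_mul_of_nonneg_left hx' (mul_nonneg hC.le (norm_nonneg (x₀ : X)))
      nlinarith [norm_nonneg (x₀ : X)]
    linarith [norm_nonneg (G (F 0))]
  · intro x₁ hx₁ heq₁
    have hdiff : x₁ - (x₀ : X) = G (N (x₀ : X)) - G (N x₁) := by
      have := heq₁
      have := heq
      have h : (G (F 0) + x₁ + G (N x₁)) - (G (F 0) + (x₀ : X) + G (N (x₀ : X))) = 0 := by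
        rw [heq₁, heq]; abel
      have h2 : x₁ - (x₀ : X) + (G (N x₁) - G (N (x₀ : X))) = 0 := by
        rw [← h]; abel
      have := eq_neg_of_add_eq_zero_left h2
      rw [this]; abel
    have h1 := hN (x₀ : X) hx₀S x₁ hx₁
    have hx' := hnorm x₀ hx₀S
    have hy' := hnorm x₁ hx₁
    have h5 : ‖x₁ - (x₀ : X)‖ ≤ C * (‖(x₀ : X)‖ + ‖x₁‖) * ‖x₁ - (x₀ : X)‖ := by
      calc ‖x₁ - (x₀ : X)‖ = ‖G (N (x₀ : X)) - G (N x₁)‖ := by rw [hdiff]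
        _ ≤ C * (‖(x₀ : X)‖ + ‖x₁‖) * ‖(x₀ : X) - x₁‖ := h1
        _ = C * (‖(x₀ : X)‖ + ‖x₁‖) * ‖x₁ - (x₀ : X)‖ := by rw [norm_sub_rev]
    have h6 : C * (‖(x₀ : X)‖ + ‖x₁‖) ≤ 1 / 4 := by nlinarith
    have h7 : ‖x₁ - (x₀ : X)‖ ≤ 0 := by nlinarith [norm_nonneg (x₁ - (x₀ : X))]
    have : x₁ - (x₀ : X) = 0 := by
      have := le_antisymm h7 (norm_nonneg _)
      exact norm_eq_zero.mp this
    exact sub_eq_zero.mp this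
end
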